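/- arXiv:1410.3769 — 2 statements merged into one kernel-verified Lean document; each statement's English description precedes it below -/
import Mathlib

section
/- Let j ∈ ℕ and consider the double sum F_j(a,q) = ∑_{k=0}^{j} ∑_{h=k}^{j} (−1)^{h+k} q^{h(k+1)+k(h+1)} [h choose k]_q [j choose h]_q · [−h; j−h]_a · [0; h]_a / [0; j]_a, a rational function in a and q arising as a 2-bridge multi-sum with two levels of summation. Then F_j(a,q) lies in ℤ[a^{±1}][q^{±1}] (i.e., the apparent denominators cancel), where [m;n]_a := ∏_{l=0}^{n-1} (a·q^{m-l} − a^{-1}·q^{l-m}) / (q^{l+1} − q^{-l-1}). -/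
open Finset

/-- The Gaussian (q-)binomial coefficient `[n choose k]_q`. -/
noncomputable def gbin {F : Type*} [Field F] (q : F) (n k : ℕ) : F :=
  ∏ l ∈ Finset.range k, (1 - q ^ ((n : ℤ) - (l : ℤ))) / (1 - q ^ ((l : ℤ) + 1))

/-- The balanced `a`-deformed binomial `[m;n]_a`. -/
noncomputable def balBin {F : Type*} [Field F] (q a : F) (m : ℤ) (n : ℕ) : F :=
  ∏ l ∈ Finset.range n,
    (a * q ^ (m - (l : ℤ)) - a⁻¹ * q ^ ((l : ℤ) - m)) /
      (q ^ ((l : ℤ) + 1) - q ^ (-(l : ℤ) - 1))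

namespace DSAux

variable {F : Type*} [Field F]

/-- denominator factor -/
noncomputable def Dfac (q : F) (l : ℕ) : F := q ^ ((l : ℤ) + 1) - q ^ (-(l : ℤ) - 1)

/-- numerator factor -/
noncomputable def Nfac (q a : F) (m : ℤ) (l : ℕ) : F :=
  a * q ^ (m - (l : ℤ)) - a⁻¹ * q ^ ((l : ℤ) - m)

lemma balBin_eq (q a : F) (m : ℤ) (n : ℕ) :
    balBin q a m n = (∏ l ∈ range n, Nfac q a m l) / (∏ l ∈ range n, Dfac q l) := by
  rw [balBin, ← Finset.prod_div_distrib]; rfl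

lemma Dfac_eq {q : F} (hq : q ≠ 0) (l : ℕ) :
    Dfac q l = ((q ^ 2) ^ (l + 1) - 1) / q ^ (l + 1) := by
  rw [eq_div_iff (pow_ne_zero _ hq), Dfac]
  have h1 : q ^ ((l : ℤ) + 1) = q ^ (l + 1) := by
    rw [← zpow_natCast q (l + 1)]; push_cast; ring_nf
  have h2 : q ^ (-(l : ℤ) - 1) = (q ^ (l + 1))⁻¹ := by
    rw [← zpow_natCast q (l + 1), ← zpow_neg]; push_cast; ring_nf
  rw [h1, h2]
  field_simp
  ring

lemma Dfac_ne {q : F} (hq : q ≠ 0) (h2 : ∀ n : ℕ, 0 < n → q ^ n ≠ 1) (l : ℕ) :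
    Dfac q l ≠ 0 := by
  rw [Dfac_eq hq]
  apply div_ne_zero _ (pow_ne_zero _ hq)
  rw [sub_ne_zero, ← pow_mul]
  exact h2 _ (by positivity)


lemma gbin_eq (x : F) (n k : ℕ) :
    gbin x n k = (∏ l ∈ range k, (1 - x ^ ((n : ℤ) - (l : ℤ)))) /
      (∏ l ∈ range k, (1 - x ^ ((l : ℤ) + 1))) := by
  rw [gbin, ← Finset.prod_div_distrib]

lemma gbin_pascal {x : F} (hx0 : x ≠ 0) (hx : ∀ l : ℕ, (1 : F) - x ^ ((l : ℤ) + 1) ≠ 0)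
    (n k : ℕ) :
    gbin x (n + 1) (k + 1) = gbin x n k + x ^ ((k : ℤ) + 1) * gbin x n (k + 1) := by
  have hA1 : (∏ l ∈ range (k + 1), (1 - x ^ (((n : ℤ) + 1) - (l : ℤ))))
      = (∏ l ∈ range k, (1 - x ^ ((n : ℤ) - (l : ℤ)))) * (1 - x ^ ((n : ℤ) + 1)) := by
    rw [Finset.prod_range_succ' (fun l => (1 - x ^ (((n : ℤ) + 1) - (l : ℤ)))) k]
    congr 1
    all_goals first
      | (apply Finset.prod_congr rfl; intro l _; congr 2 <;> (try push_cast) <;> (try ring))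
      | (congr 2 <;> (try push_cast) <;> (try ring))
  have hA2 : (∏ l ∈ range (k + 1), (1 - x ^ ((n : ℤ) - (l : ℤ))))
      = (∏ l ∈ range k, (1 - x ^ ((n : ℤ) - (l : ℤ)))) * (1 - x ^ ((n : ℤ) - (k : ℤ))) :=
    Finset.prod_range_succ _ _
  have hB : (∏ l ∈ range (k + 1), (1 - x ^ ((l : ℤ) + 1)))
      = (∏ l ∈ range k, (1 - x ^ ((l : ℤ) + 1))) * (1 - x ^ ((k : ℤ) + 1)) :=
    Finset.prod_range_succ _ _
  have hBne : (∏ l ∈ range k, (1 - x ^ ((l : ℤ) + 1))) ≠ 0 :=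
    Finset.prod_ne_zero_iff.mpr fun l _ => hx l
  have hkey : x ^ ((k : ℤ) + 1) * x ^ ((n : ℤ) - (k : ℤ)) = x ^ ((n : ℤ) + 1) := by
    rw [← zpow_add₀ hx0]; congr 1; ring
  have hgn : gbin x (n + 1) (k + 1)
      = (∏ l ∈ range (k + 1), (1 - x ^ (((n : ℤ) + 1) - (l : ℤ)))) /
        (∏ l ∈ range (k + 1), (1 - x ^ ((l : ℤ) + 1))) := by
    rw [gbin_eq]
    congr 1
    all_goals (apply Finset.prod_congr rfl; intro l _; congr 2 <;> (try push_cast) <;> (try ring))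
  rw [hgn, gbin_eq, gbin_eq, hA1, hA2, hB, ← hkey]
  have hk1 := hx k
  field_simp [hBne, hk1]
  ring

lemma gbin_mem {x : F} (hx0 : x ≠ 0) (hx : ∀ l : ℕ, (1 : F) - x ^ ((l : ℤ) + 1) ≠ 0) :
    ∀ n k : ℕ, gbin x n k ∈ Algebra.adjoin ℤ ({x} : Set F) := by
  intro n
  induction n with
  | zero =>
    intro k
    match k with
    | 0 => simp [gbin]
    | k + 1 =>
      have : gbin x 0 (k + 1) = 0 := by
        rw [gbin]
        apply Finset.prod_eq_zero (Finset.mem_range.mpr (Nat.succ_pos k))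
        norm_num
      rw [this]; exact zero_mem _
  | succ n ih =>
    intro k
    match k with
    | 0 => simp [gbin]
    | k + 1 =>
      rw [gbin_pascal hx0 hx]
      refine add_mem (ih k) (mul_mem ?_ (ih (k + 1)))
      have : x ^ ((k : ℤ) + 1) = x ^ (k + 1) := by
        rw [← zpow_natCast x (k + 1)]; push_cast; ring_nf
      rw [this]
      exact pow_mem (Algebra.self_mem_adjoin_singleton ℤ x) _



lemma ratio_eq {q : F} (hq : q ≠ 0) (h2 : ∀ n : ℕ, 0 < n → q ^ n ≠ 1)
    {h j : ℕ} (hhj : h ≤ j) :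
    q ^ (h * (j - h)) * ((∏ l ∈ Finset.Ico h j, Dfac q l) / (∏ l ∈ range (j - h), Dfac q l))
      = gbin (q ^ 2) j (j - h) := by
  set n := j - h with hn
  have hQne : ∀ m : ℕ, ((q ^ 2) ^ (m + 1) : F) - 1 ≠ 0 := by
    intro m
    rw [sub_ne_zero, ← pow_mul]
    exact h2 _ (by positivity)
  have hQne' : ∀ m : ℕ, (1 : F) - (q ^ 2) ^ (m + 1) ≠ 0 := by
    intro m
    rw [sub_ne_zero]
    exact fun e => hQne m (by rw [← e]; ring)
  -- left side as a single product
  rw [Finset.prod_Ico_eq_prod_range]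
  have hL : q ^ (h * n) * ((∏ i ∈ range n, Dfac q (h + i)) / (∏ i ∈ range n, Dfac q i))
      = ∏ i ∈ range n, (q ^ h * (Dfac q (h + i) / Dfac q i)) := by
    rw [Finset.prod_mul_distrib, Finset.prod_const, Finset.card_range, Finset.prod_div_distrib, ← pow_mul]
  rw [hL]
  -- right side: reflect the numerator
  rw [gbin_eq]
  have hrefl : (∏ l ∈ range n, ((1 : F) - (q ^ 2) ^ ((j : ℤ) - (l : ℤ))))
      = ∏ i ∈ range n, ((1 : F) - (q ^ 2) ^ (h + i + 1)) := by
    rw [← Finset.prod_range_reflect (fun l => ((1 : F) - (q ^ 2) ^ ((j : ℤ) - (l : ℤ)))) n]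
    apply Finset.prod_congr rfl
    intro i hi
    have hi' : i < n := Finset.mem_range.mp hi
    have e1 : (j : ℤ) - ((n - 1 - i : ℕ) : ℤ) = ((h + i + 1 : ℕ) : ℤ) := by
      have : h ≤ j := hhj
      omega
    rw [e1, zpow_natCast]
  rw [hrefl]
  have hden : (∏ l ∈ range n, ((1 : F) - (q ^ 2) ^ ((l : ℤ) + 1)))
      = ∏ l ∈ range n, ((1 : F) - (q ^ 2) ^ (l + 1)) := by
    apply Finset.prod_congr rfl
    intro l _
    have e : ((l : ℤ) + 1) = ((l + 1 : ℕ) : ℤ) := by push_cast; ring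
    rw [e, zpow_natCast]
  rw [hden, ← Finset.prod_div_distrib]
  apply Finset.prod_congr rfl
  intro i _
  rw [Dfac_eq hq, Dfac_eq hq]
  have h1 := hQne i
  have h1' : (1 : F) - (q ^ 2) ^ (i + 1) ≠ 0 := fun e => h1 (by linear_combination -e)
  rw [div_div_div_comm, eq_div_iff h1']
  field_simp
  ring

lemma bal_ratio {q a : F} (hD : ∀ l : ℕ, Dfac q l ≠ 0) (hN : ∀ l : ℕ, Nfac q a 0 l ≠ 0)
    {h j : ℕ} (hhj : h ≤ j) :
    balBin q a (-(h : ℤ)) (j - h) * balBin q a 0 h / balBin q a 0 j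
      = (∏ l ∈ Finset.Ico h j, Dfac q l) / (∏ l ∈ range (j - h), Dfac q l) := by
  rw [balBin_eq, balBin_eq, balBin_eq]
  have hNshift : (∏ l ∈ range (j - h), Nfac q a (-(h : ℤ)) l)
      = ∏ l ∈ Finset.Ico h j, Nfac q a 0 l := by
    rw [Finset.prod_Ico_eq_prod_range]
    apply Finset.prod_congr rfl
    intro i _
    have e1 : -(h : ℤ) - (i : ℤ) = 0 - ((h + i : ℕ) : ℤ) := by push_cast; ring
    have e2 : (i : ℤ) - (-(h : ℤ)) = ((h + i : ℕ) : ℤ) - 0 := by push_cast; ring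
    rw [Nfac, Nfac, e1, e2]
  have hsplitN : (∏ l ∈ range j, Nfac q a 0 l)
      = (∏ l ∈ range h, Nfac q a 0 l) * ∏ l ∈ Finset.Ico h j, Nfac q a 0 l :=
    (Finset.prod_range_mul_prod_Ico _ hhj).symm
  have hsplitD : (∏ l ∈ range j, Dfac q l)
      = (∏ l ∈ range h, Dfac q l) * ∏ l ∈ Finset.Ico h j, Dfac q l :=
    (Finset.prod_range_mul_prod_Ico _ hhj).symm
  rw [hNshift, hsplitN, hsplitD]
  have n1 : (∏ l ∈ range h, Nfac q a 0 l) ≠ 0 := Finset.prod_ne_zero_iff.mpr fun l _ => hN l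
  have n2 : (∏ l ∈ Finset.Ico h j, Nfac q a 0 l) ≠ 0 := Finset.prod_ne_zero_iff.mpr fun l _ => hN l
  have d1 : (∏ l ∈ range h, Dfac q l) ≠ 0 := Finset.prod_ne_zero_iff.mpr fun l _ => hD l
  have d2 : (∏ l ∈ Finset.Ico h j, Dfac q l) ≠ 0 := Finset.prod_ne_zero_iff.mpr fun l _ => hD l
  have d3 : (∏ l ∈ range (j - h), Dfac q l) ≠ 0 := Finset.prod_ne_zero_iff.mpr fun l _ => hD l
  field_simp



/-- elements that become integer polynomials in `q` after clearing a power of `q` -/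
def LL (q : F) : Subring F where
  carrier := {x | ∃ β : ℕ, q ^ β * x ∈ Algebra.adjoin ℤ ({q} : Set F)}
  one_mem' := ⟨0, by simpa using one_mem _⟩
  zero_mem' := ⟨0, by simpa using zero_mem _⟩
  mul_mem' := by
    rintro x y ⟨b1, h1⟩ ⟨b2, h2⟩
    exact ⟨b1 + b2, by
      rw [show q ^ (b1 + b2) * (x * y) = (q ^ b1 * x) * (q ^ b2 * y) by ring]
      exact mul_mem h1 h2⟩
  add_mem' := by
    rintro x y ⟨b1, h1⟩ ⟨b2, h2⟩
    refine ⟨b1 + b2, ?_⟩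
    rw [show q ^ (b1 + b2) * (x + y) = q ^ b2 * (q ^ b1 * x) + q ^ b1 * (q ^ b2 * y) by ring]
    exact add_mem
      (mul_mem (pow_mem (Algebra.self_mem_adjoin_singleton ℤ q) _) h1)
      (mul_mem (pow_mem (Algebra.self_mem_adjoin_singleton ℤ q) _) h2)
  neg_mem' := by
    rintro x ⟨b, hb⟩
    exact ⟨b, by rw [mul_neg]; exact neg_mem hb⟩

lemma mem_LL_of_adjoin {q x : F} (hx : x ∈ Algebra.adjoin ℤ ({q} : Set F)) : x ∈ LL q :=
  ⟨0, by simpa using hx⟩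

lemma q_mem_LL (q : F) : q ∈ LL q :=
  mem_LL_of_adjoin (Algebra.self_mem_adjoin_singleton ℤ q)

end DSAux

open DSAux in
/-- The 2-bridge double sum `F_j(a,q)` lies in `ℤ[a^{±1}, q^{±1}]`:
after clearing a monomial `a^α q^β` it is the evaluation of an integral
polynomial in `a` and `q`. -/
theorem doubleSum_is_Laurent {F : Type*} [Field F] [CharZero F] [Algebra ℚ F]
    (q a : F) (hind : AlgebraicIndependent ℚ ![q, a]) (j : ℕ) :
    ∃ p : MvPolynomial (Fin 2) ℤ, ∃ α β : ℕ,
      a ^ α * q ^ β *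
          (∑ k ∈ Finset.range (j + 1), ∑ h ∈ Finset.Icc k j,
            (-1 : F) ^ (h + k) * q ^ (h * (k + 1) + k * (h + 1)) *
              gbin q h k * gbin q j h *
              balBin q a (-(h : ℤ)) (j - h) * balBin q a 0 h / balBin q a 0 j) =
        MvPolynomial.eval₂ (Int.castRingHom F) ![a, q] p := by
  have hinj : Function.Injective
      ⇑(MvPolynomial.aeval ![q, a] : MvPolynomial (Fin 2) ℚ →ₐ[ℚ] F) :=
    algebraicIndependent_iff_injective_aeval.mp hind
  have hq : q ≠ 0 := by
    intro h
    have hX : (MvPolynomial.X 0 : MvPolynomial (Fin 2) ℚ) = 0 := hinj (by simp [h])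
    exact MvPolynomial.X_ne_zero _ hX
  have ha : a ≠ 0 := by
    intro h
    have hX : (MvPolynomial.X 1 : MvPolynomial (Fin 2) ℚ) = 0 := hinj (by simp [h])
    exact MvPolynomial.X_ne_zero _ hX
  have hpow : ∀ n : ℕ, 0 < n → q ^ n ≠ 1 := by
    intro n hn e
    have hX : (MvPolynomial.X 0 ^ n : MvPolynomial (Fin 2) ℚ) = 1 := hinj (by simp [e])
    have h2 := congrArg (MvPolynomial.eval ![2, 0]) hX
    simp at h2
    have h3 : (2 : ℚ) ^ 1 ≤ 2 ^ n := pow_le_pow_right₀ (by norm_num) hn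
    rw [h2] at h3
    norm_num at h3
  have hne : ∀ n : ℕ, (a ^ 2 : F) ≠ q ^ n := by
    intro n e
    have hX : (MvPolynomial.X 1 ^ 2 : MvPolynomial (Fin 2) ℚ)
        = MvPolynomial.X 0 ^ n := hinj (by simp [e])
    have h2 := congrArg (MvPolynomial.eval ![0, 2]) hX
    simp at h2
    rcases n with _ | m
    · norm_num at h2
    · rw [zero_pow (Nat.succ_ne_zero m)] at h2
      norm_num at h2
  have hD : ∀ l : ℕ, Dfac q l ≠ 0 := Dfac_ne hq hpow
  have hN : ∀ l : ℕ, Nfac q a 0 l ≠ 0 := by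
    intro l e
    apply hne (2 * l)
    have e1 : q ^ ((0 : ℤ) - (l : ℤ)) = (q ^ l)⁻¹ := by
      rw [zero_sub, zpow_neg, zpow_natCast]
    have e2 : q ^ ((l : ℤ) - (0 : ℤ)) = q ^ l := by rw [sub_zero, zpow_natCast]
    rw [Nfac, e1, e2, sub_eq_zero] at e
    have hql : (q : F) ^ l ≠ 0 := pow_ne_zero _ hq
    field_simp at e
    rw [show 2 * l = l + l by ring, pow_add, sq]
    linear_combination e
  have hNe : ∀ l : ℕ, (1 : F) - q ^ ((l : ℤ) + 1) ≠ 0 := by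
    intro l
    have : q ^ ((l : ℤ) + 1) = q ^ (l + 1) := by
      rw [← zpow_natCast q (l + 1)]; push_cast; ring_nf
    rw [this, sub_ne_zero]
    exact (hpow (l + 1) l.succ_pos).symm
  have hNe2 : ∀ l : ℕ, (1 : F) - (q ^ 2) ^ ((l : ℤ) + 1) ≠ 0 := by
    intro l
    have : (q ^ 2) ^ ((l : ℤ) + 1) = (q ^ 2) ^ (l + 1) := by
      rw [← zpow_natCast (q ^ 2) (l + 1)]; push_cast; ring_nf
    rw [this, sub_ne_zero, ← pow_mul]
    exact (hpow (2 * (l + 1)) (by positivity)).symm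
  have hadj2 : Algebra.adjoin ℤ ({q ^ 2} : Set F) ≤ Algebra.adjoin ℤ ({q} : Set F) := by
    apply Algebra.adjoin_le
    rw [Set.singleton_subset_iff]
    exact pow_mem (Algebra.self_mem_adjoin_singleton ℤ q) 2
  -- the whole sum lies in LL q
  have key : (∑ k ∈ Finset.range (j + 1), ∑ h ∈ Finset.Icc k j,
      (-1 : F) ^ (h + k) * q ^ (h * (k + 1) + k * (h + 1)) *
        gbin q h k * gbin q j h *
        balBin q a (-(h : ℤ)) (j - h) * balBin q a 0 h / balBin q a 0 j) ∈ LL q := by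
    apply Subring.sum_mem
    intro k _
    apply Subring.sum_mem
    intro h hh
    have hhj : h ≤ j := (Finset.mem_Icc.mp hh).2
    have hT : (-1 : F) ^ (h + k) * q ^ (h * (k + 1) + k * (h + 1)) *
        gbin q h k * gbin q j h *
        balBin q a (-(h : ℤ)) (j - h) * balBin q a 0 h / balBin q a 0 j
      = ((-1 : F) ^ (h + k) * q ^ (h * (k + 1) + k * (h + 1)) *
          gbin q h k * gbin q j h) *
        (balBin q a (-(h : ℤ)) (j - h) * balBin q a 0 h / balBin q a 0 j) := by
      ring
    rw [hT, bal_ratio hD hN hhj]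
    refine mul_mem (mul_mem (mul_mem (mul_mem ?_ ?_) ?_) ?_) ?_
    · exact pow_mem (neg_mem (one_mem _)) _
    · exact pow_mem (q_mem_LL q) _
    · exact mem_LL_of_adjoin (gbin_mem hq hNe h k)
    · exact mem_LL_of_adjoin (gbin_mem hq hNe j h)
    · refine ⟨h * (j - h), ?_⟩
      rw [ratio_eq hq hpow hhj]
      exact hadj2 (gbin_mem (pow_ne_zero 2 hq) hNe2 j (j - h))
  obtain ⟨β, hβ⟩ := key
  rw [Algebra.adjoin_singleton_eq_range_aeval, AlgHom.mem_range] at hβ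
  obtain ⟨P, hP⟩ := hβ
  refine ⟨Polynomial.eval₂ MvPolynomial.C (MvPolynomial.X 1) P, 0, β, ?_⟩
  rw [pow_zero, one_mul, ← hP]
  have hcomp : MvPolynomial.eval₂ (Int.castRingHom F) ![a, q]
      (Polynomial.eval₂ MvPolynomial.C (MvPolynomial.X 1) P)
      = Polynomial.eval₂ (Int.castRingHom F) q P := by
    rw [show MvPolynomial.eval₂ (Int.castRingHom F) ![a, q]
        (Polynomial.eval₂ MvPolynomial.C (MvPolynomial.X 1) P)
      = (MvPolynomial.eval₂Hom (Int.castRingHom F) ![a, q])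
          (Polynomial.eval₂ MvPolynomial.C (MvPolynomial.X 1) P) from rfl]
    rw [Polynomial.hom_eval₂]
    congr 1
    · exact RingHom.ext_int _ _
    · simp
  rw [hcomp, Polynomial.aeval_def, algebraMap_int_eq]
end

section
/- Let q be transcendental over ℚ and fix c ∈ ℕ. The sequence f_n = [c·n choose n]_q of Gaussian binomial coefficients is q-holonomic: there exist d ∈ ℕ and polynomials a_0, …, a_d ∈ ℤ[u,v], not all zero, with ∑_{l=0}^{d} a_l(q, q^n) f_{n+l} = 0 for all n ∈ ℕ. -/
/-- A sequence `f : ℕ → F` is q-holonomic (with respect to `q : F`) if it is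
annihilated by a nonzero operator `∑ aₗ(q, M) Lˡ` with `aₗ ∈ ℤ[u,v]`,
where `(M f)ₙ = qⁿ fₙ` and `(L f)ₙ = f_{n+1}`. -/
def qHolonomic {F : Type*} [Field F] (q : F) (f : ℕ → F) : Prop :=
  ∃ d : ℕ, ∃ c : ℕ → MvPolynomial (Fin 2) ℤ,
    (∃ l, l ≤ d ∧ c l ≠ 0) ∧
    ∀ n : ℕ,
      ∑ l ∈ Finset.range (d + 1),
        MvPolynomial.eval₂ (Int.castRingHom F) ![q, q ^ n] (c l) * f (n + l) = 0

section Aux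

set_option linter.unusedSectionVars false

variable {F : Type*} [Field F] [CharZero F] [Algebra ℚ F]

lemma aux_pow_ne_one {q : F} (hq : Transcendental ℚ q) {k : ℕ} (hk : 0 < k) : q ^ k ≠ 1 := by
  intro h
  exact hq ⟨Polynomial.X ^ k - Polynomial.C 1,
    Polynomial.X_pow_sub_C_ne_zero hk 1, by simp [h]⟩

lemma aux_one_sub_ne {q : F} (hq : Transcendental ℚ q) {k : ℕ} (hk : 0 < k) :
    (1 : F) - q ^ k ≠ 0 :=
  sub_ne_zero.mpr fun h => aux_pow_ne_one hq hk h.symm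

lemma gbin_eq {q : F} (m k : ℕ) (h : k ≤ m) :
    gbin q m k = (∏ l ∈ Finset.range k, (1 - q ^ (m - l))) /
                 (∏ l ∈ Finset.range k, (1 - q ^ (l + 1))) := by
  rw [gbin, ← Finset.prod_div_distrib]
  refine Finset.prod_congr rfl fun l hl => ?_
  rw [Finset.mem_range] at hl
  have h1 : (m : ℤ) - (l : ℤ) = ((m - l : ℕ) : ℤ) := by omega
  have h2 : (l : ℤ) + 1 = ((l + 1 : ℕ) : ℤ) := by push_cast; ring
  rw [h1, h2, zpow_natCast, zpow_natCast]

lemma numer_shift {q : F} (m k b : ℕ) (h : m + 1 = b + k) :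
    ∏ l ∈ Finset.range k, (1 - q ^ (m - l)) =
      ∏ l ∈ Finset.range k, (1 - q ^ (b + l)) := by
  conv_rhs => rw [← Finset.prod_range_reflect]
  refine Finset.prod_congr rfl fun l hl => ?_
  rw [Finset.mem_range] at hl
  congr 2
  omega

lemma gbin_key {q : F} (hq : Transcendental ℚ q) (c n : ℕ) :
    (1 - q ^ (n + 1)) * (∏ i ∈ Finset.range c, (1 - q ^ (c * n + 1 + i))) *
      gbin q ((c + 1) * (n + 1)) (n + 1)
    = (∏ i ∈ Finset.range (c + 1), (1 - q ^ ((c + 1) * n + 1 + i))) *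
      gbin q ((c + 1) * n) n := by
  have hD : (∏ l ∈ Finset.range n, ((1 : F) - q ^ (l + 1))) ≠ 0 :=
    Finset.prod_ne_zero_iff.mpr fun l _ => aux_one_sub_ne hq (Nat.succ_pos l)
  have hq1 : (1 : F) - q ^ (n + 1) ≠ 0 := aux_one_sub_ne hq (Nat.succ_pos n)
  rw [gbin_eq ((c + 1) * (n + 1)) (n + 1) (by nlinarith), gbin_eq ((c + 1) * n) n (by nlinarith),
    numer_shift ((c + 1) * (n + 1)) (n + 1) (c * n + c + 1) (by ring),
    numer_shift ((c + 1) * n) n (c * n + 1) (by ring),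
    Finset.prod_range_succ (fun l => (1 : F) - q ^ (l + 1)) n]
  have h1 : (∏ i ∈ Finset.range c, ((1:F) - q ^ (c * n + 1 + i))) *
      (∏ l ∈ Finset.range (n + 1), ((1:F) - q ^ (c * n + c + 1 + l))) =
      ∏ j ∈ Finset.range (c + (n + 1)), ((1:F) - q ^ (c * n + 1 + j)) := by
    conv_rhs => rw [Finset.prod_range_add]
    congr 1
    refine Finset.prod_congr rfl fun l _ => ?_
    have he : c * n + c + 1 + l = c * n + 1 + (c + l) := by omega
    rw [he]
  have h2 : (∏ i ∈ Finset.range (c + 1), ((1:F) - q ^ ((c + 1) * n + 1 + i))) *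
      (∏ l ∈ Finset.range n, ((1:F) - q ^ (c * n + 1 + l))) =
      ∏ j ∈ Finset.range (n + (c + 1)), ((1:F) - q ^ (c * n + 1 + j)) := by
    rw [mul_comm]
    conv_rhs => rw [Finset.prod_range_add]
    congr 1
    refine Finset.prod_congr rfl fun l _ => ?_
    have he : (c + 1) * n + 1 + l = c * n + 1 + (n + l) := by ring
    rw [he]
  have hcn : c + (n + 1) = n + (c + 1) := by omega
  rw [hcn] at h1
  field_simp
  linear_combination (h1.trans h2.symm)

end Aux

theorem gbin_cn_n_qHolonomic {F : Type*} [Field F] [CharZero F] [Algebra ℚ F]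
    (q : F) (hq : Transcendental ℚ q) (c : ℕ) :
    qHolonomic q (fun n => gbin q (c * n) n) := by
  rcases c with _ | c
  · -- c = 0 : f 0 = 1 and f (n+1) = 0, use the operator L
    refine ⟨1, fun l => if l = 1 then 1 else 0, ⟨1, le_refl 1, by simp⟩, fun n => ?_⟩
    rw [Finset.sum_range_succ, Finset.sum_range_one]
    simp only [if_pos rfl, one_ne_zero, if_neg (by norm_num : (0:ℕ) ≠ 1)]
    have h0 : gbin q 0 (n + 1) = 0 := by
      rw [gbin]
      refine Finset.prod_eq_zero (Finset.mem_range.mpr (Nat.succ_pos n)) ?_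
      simp
    simp [h0]

  · -- c + 1 ≥ 1 : first-order q-hypergeometric recurrence
    set A : MvPolynomial (Fin 2) ℤ :=
      ∏ i ∈ Finset.range (c + 1),
        (1 - MvPolynomial.X 0 ^ (i + 1) * MvPolynomial.X 1 ^ (c + 1)) with hA_def
    set B : MvPolynomial (Fin 2) ℤ :=
      (1 - MvPolynomial.X 0 * MvPolynomial.X 1) *
        ∏ i ∈ Finset.range c, (1 - MvPolynomial.X 0 ^ (i + 1) * MvPolynomial.X 1 ^ c) with hB_def
    have hA_ne : A ≠ 0 := by
      intro h
      have h2 := congrArg (MvPolynomial.eval (fun _ => (0 : ℤ))) h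
      rw [hA_def, map_prod] at h2
      simp at h2
    refine ⟨1, fun l => if l = 0 then A else if l = 1 then -B else 0,
      ⟨0, Nat.zero_le 1, by simpa using hA_ne⟩, fun n => ?_⟩
    rw [Finset.sum_range_succ, Finset.sum_range_one]
    simp only [reduceIte, Nat.add_zero]
    have hAe : MvPolynomial.eval₂ (Int.castRingHom F) ![q, q ^ n] A =
        ∏ i ∈ Finset.range (c + 1), (1 - q ^ ((c + 1) * n + 1 + i)) := by
      rw [hA_def, MvPolynomial.eval₂_prod]
      refine Finset.prod_congr rfl fun i _ => ?_
      simp only [MvPolynomial.eval₂_sub, MvPolynomial.eval₂_one, MvPolynomial.eval₂_mul,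
        MvPolynomial.eval₂_pow, MvPolynomial.eval₂_X, Matrix.cons_val_zero, Matrix.cons_val_one,
        Matrix.head_cons]
      rw [← pow_mul, ← pow_add]
      congr 1
      ring
    have hBe : MvPolynomial.eval₂ (Int.castRingHom F) ![q, q ^ n] B =
        (1 - q ^ (n + 1)) * ∏ i ∈ Finset.range c, (1 - q ^ (c * n + 1 + i)) := by
      rw [hB_def, MvPolynomial.eval₂_mul, MvPolynomial.eval₂_prod]
      congr 1
      · simp only [MvPolynomial.eval₂_sub, MvPolynomial.eval₂_one, MvPolynomial.eval₂_mul,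
          MvPolynomial.eval₂_X, Matrix.cons_val_zero, Matrix.cons_val_one, Matrix.head_cons]
        rw [← pow_succ']
      · refine Finset.prod_congr rfl fun i _ => ?_
        simp only [MvPolynomial.eval₂_sub, MvPolynomial.eval₂_one, MvPolynomial.eval₂_mul,
          MvPolynomial.eval₂_pow, MvPolynomial.eval₂_X, Matrix.cons_val_zero, Matrix.cons_val_one,
          Matrix.head_cons]
        rw [← pow_mul, ← pow_add]
        congr 1
        ring
    have hBneg : MvPolynomial.eval₂ (Int.castRingHom F) ![q, q ^ n] (-B) =
        -((1 - q ^ (n + 1)) * ∏ i ∈ Finset.range c, (1 - q ^ (c * n + 1 + i))) := by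
      rw [show MvPolynomial.eval₂ (Int.castRingHom F) ![q, q ^ n] (-B)
          = MvPolynomial.eval₂Hom (Int.castRingHom F) ![q, q ^ n] (-B) from rfl, map_neg]
      exact congrArg Neg.neg hBe
    rw [if_neg (by norm_num : ¬(1 = 0))] 
    rw [hAe, hBneg]
    have hk := gbin_key hq c n
    linear_combination -hk
end
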